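/- arXiv:0811.0400 — 4 statements merged into one kernel-verified Lean document; each statement's English description precedes it below -/
import Mathlib

section
/- Let V be a vector space over a field K and let Δ : V → V ⊗ V and β : V → V be K-linear maps. Set Δ_L := Δ − Δ^op where Δ^op := τ ∘ Δ with τ(a ⊗ b) = b ⊗ a, and let c_β(Λ) := (Λ ⊗ β) ∘ Λ − (β ⊗ Λ) ∘ Λ. For σ in the symmetric group S₃ on {1,2,3}, let Φ_σ : V⊗V⊗V → V⊗V⊗V be the K-linear map with Φ_σ(x₁ ⊗ x₂ ⊗ x₃) = x_{σ⁻¹(1)} ⊗ x_{σ⁻¹(2)} ⊗ x_{σ⁻¹(3)}. Then c_β(Δ_L) + C ∘ c_β(Δ_L) + C² ∘ c_β(Δ_L) = 2 Σ_{σ ∈ S₃} sgn(σ) Φ_σ ∘ c_β(Δ), where C is the 3-cycle map a ⊗ b ⊗ c ↦ b ⊗ c ⊗ a (so C² is a ⊗ b ⊗ c ↦ c ⊗ a ⊗ b) and sgn(σ) is the signature of σ. -/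
open TensorProduct

set_option linter.unusedSectionVars false

section Defs

variable {K V : Type*} [Field K] [AddCommGroup V] [Module K V]

/-- The value of Φ_σ on a triple of vectors: x_{σ⁻¹(1)} ⊗ x_{σ⁻¹(2)} ⊗ x_{σ⁻¹(3)}
(indices taken in Fin 3). -/
noncomputable def phiFun (σ : Equiv.Perm (Fin 3)) (m : Fin 3 → V) :
    V ⊗[K] (V ⊗[K] V) :=
  m (σ⁻¹ 0) ⊗ₜ[K] (m (σ⁻¹ 1) ⊗ₜ[K] m (σ⁻¹ 2))

lemma fin3_cases (σ : Equiv.Perm (Fin 3)) (i : Fin 3) :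
    i = σ⁻¹ 0 ∨ i = σ⁻¹ 1 ∨ i = σ⁻¹ 2 := by
  have hk : ∀ k : Fin 3, k = 0 ∨ k = 1 ∨ k = 2 := by decide
  rcases hk (σ i) with h | h | h
  · left; rw [← h]; simp
  · right; left; rw [← h]; simp
  · right; right; rw [← h]; simp

lemma phiFun_update_add (σ : Equiv.Perm (Fin 3)) (m : Fin 3 → V) (i : Fin 3)
    (x y : V) :
    phiFun (K := K) σ (Function.update m i (x + y))
      = phiFun (K := K) σ (Function.update m i x)
        + phiFun (K := K) σ (Function.update m i y) := by
  rcases fin3_cases σ i with h | h | h <;> subst h <;>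
    simp [phiFun, Function.update_apply, add_tmul, tmul_add]

lemma phiFun_update_smul (σ : Equiv.Perm (Fin 3)) (m : Fin 3 → V) (i : Fin 3)
    (c : K) (x : V) :
    phiFun (K := K) σ (Function.update m i (c • x))
      = c • phiFun (K := K) σ (Function.update m i x) := by
  rcases fin3_cases σ i with h | h | h <;> subst h <;>
    simp [phiFun, Function.update_apply, smul_tmul, tmul_smul]

lemma update_vec0 (x y z w : V) : Function.update ![x, y, z] 0 w = ![w, y, z] := by
  funext j; fin_cases j <;> simp [Function.update]

lemma update_vec1 (x y z w : V) : Function.update ![x, y, z] 1 w = ![x, w, z] := by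
  funext j; fin_cases j <;> simp [Function.update]

lemma update_vec2 (x y z w : V) : Function.update ![x, y, z] 2 w = ![x, y, w] := by
  funext j; fin_cases j <;> simp [Function.update]

/-- Φ_σ as a trilinear map: (x₁, x₂, x₃) ↦ x_{σ⁻¹(1)} ⊗ x_{σ⁻¹(2)} ⊗ x_{σ⁻¹(3)}. -/
noncomputable def phiTri (σ : Equiv.Perm (Fin 3)) :
    V →ₗ[K] V →ₗ[K] V →ₗ[K] V ⊗[K] (V ⊗[K] V) :=
  LinearMap.mk₂ K
    (fun x y =>
      { toFun := fun z => phiFun (K := K) σ ![x, y, z]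
        map_add' := fun z z' => by
          have h := phiFun_update_add (K := K) (V := V) σ ![x, y, z] 2 z z'
          simpa [update_vec2] using h
        map_smul' := fun c z => by
          have h := phiFun_update_smul (K := K) (V := V) σ ![x, y, z] 2 c z
          simpa [update_vec2] using h })
    (fun x x' y => by
      ext z
      have h := phiFun_update_add (K := K) (V := V) σ ![x, y, z] 0 x x'
      simpa [update_vec0] using h)
    (fun c x y => by
      ext z
      have h := phiFun_update_smul (K := K) (V := V) σ ![x, y, z] 0 c x
      simpa [update_vec0] using h)
    (fun x y y' => by
      ext z
      have h := phiFun_update_add (K := K) (V := V) σ ![x, y, z] 1 y y'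
      simpa [update_vec1] using h)
    (fun c x y => by
      ext z
      have h := phiFun_update_smul (K := K) (V := V) σ ![x, y, z] 1 c y
      simpa [update_vec1] using h)

/-- Φ_σ : V ⊗ V ⊗ V → V ⊗ V ⊗ V, the linear map determined by
Φ_σ(x₁ ⊗ x₂ ⊗ x₃) = x_{σ⁻¹(1)} ⊗ x_{σ⁻¹(2)} ⊗ x_{σ⁻¹(3)}. -/
noncomputable def Phi (σ : Equiv.Perm (Fin 3)) :
    V ⊗[K] (V ⊗[K] V) →ₗ[K] V ⊗[K] (V ⊗[K] V) :=
  TensorProduct.lift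
    ((TensorProduct.lift.equiv (RingHom.id K) V V (V ⊗[K] (V ⊗[K] V))).toLinearMap ∘ₗ phiTri σ)

/-- Defining property of `Phi`. -/
lemma Phi_tmul (σ : Equiv.Perm (Fin 3)) (x y z : V) :
    Phi (K := K) σ (x ⊗ₜ[K] (y ⊗ₜ[K] z))
      = ![x, y, z] (σ⁻¹ 0) ⊗ₜ[K] (![x, y, z] (σ⁻¹ 1) ⊗ₜ[K] ![x, y, z] (σ⁻¹ 2)) := by
  simp [Phi, phiTri, phiFun]

/-- Δ^op := τ ∘ Δ, the opposite comultiplication. -/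
noncomputable def deltaOp (Δ : V →ₗ[K] V ⊗[K] V) : V →ₗ[K] V ⊗[K] V :=
  (TensorProduct.comm K V V).toLinearMap ∘ₗ Δ

/-- The β-coassociator c_β(Λ) := (Λ ⊗ β) ∘ Λ − (β ⊗ Λ) ∘ Λ, with values in
V ⊗ (V ⊗ V). -/
noncomputable def coassoc (Λ : V →ₗ[K] V ⊗[K] V) (β : V →ₗ[K] V) :
    V →ₗ[K] V ⊗[K] (V ⊗[K] V) :=
  (TensorProduct.assoc K V V V).toLinearMap ∘ₗ TensorProduct.map Λ β ∘ₗ Λ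
    - TensorProduct.map β Λ ∘ₗ Λ

variable (K V) in
/-- The 3-cycle map C : a ⊗ b ⊗ c ↦ b ⊗ c ⊗ a on V ⊗ (V ⊗ V). -/
noncomputable def cyc3 : V ⊗[K] (V ⊗[K] V) →ₗ[K] V ⊗[K] (V ⊗[K] V) :=
  (TensorProduct.assoc K V V V).toLinearMap
    ∘ₗ (TensorProduct.comm K V (V ⊗[K] V)).toLinearMap

end Defs

section Aux
variable {K V : Type*} [Field K] [AddCommGroup V] [Module K V]

lemma cyc3_tmul (x y z : V) : cyc3 K V (x ⊗ₜ[K] (y ⊗ₜ[K] z)) = y ⊗ₜ[K] (z ⊗ₜ[K] x) := by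
  simp [cyc3]

variable (K V) in
noncomputable def Ssum : V ⊗[K] (V ⊗[K] V) →ₗ[K] V ⊗[K] (V ⊗[K] V) :=
  ∑ σ : Equiv.Perm (Fin 3), ((Equiv.Perm.sign σ : ℤ) • Phi σ)

lemma Ssum_tmul (x y z : V) :
    Ssum K V (x ⊗ₜ[K] (y ⊗ₜ[K] z))
      = x ⊗ₜ[K] (y ⊗ₜ[K] z) + y ⊗ₜ[K] (z ⊗ₜ[K] x) + z ⊗ₜ[K] (x ⊗ₜ[K] y)
        - y ⊗ₜ[K] (x ⊗ₜ[K] z) - x ⊗ₜ[K] (z ⊗ₜ[K] y) - z ⊗ₜ[K] (y ⊗ₜ[K] x) := by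
  have huniv : (Finset.univ : Finset (Equiv.Perm (Fin 3))) =
      {1, Equiv.swap 0 1, Equiv.swap 0 2, Equiv.swap 1 2,
       Equiv.swap 0 1 * Equiv.swap 0 2, Equiv.swap 0 2 * Equiv.swap 0 1} := by decide
  rw [Ssum, huniv]
  rw [Finset.sum_insert (by decide), Finset.sum_insert (by decide),
      Finset.sum_insert (by decide), Finset.sum_insert (by decide),
      Finset.sum_insert (by decide), Finset.sum_singleton]
  simp only [LinearMap.add_apply, LinearMap.smul_apply, Phi_tmul,
    show (((1 : Equiv.Perm (Fin 3)))⁻¹ : Equiv.Perm (Fin 3)) 0 = 0 by decide,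
    show (((1 : Equiv.Perm (Fin 3)))⁻¹ : Equiv.Perm (Fin 3)) 1 = 1 by decide,
    show (((1 : Equiv.Perm (Fin 3)))⁻¹ : Equiv.Perm (Fin 3)) 2 = 2 by decide,
    show ((Equiv.swap (0:Fin 3) 1)⁻¹ : Equiv.Perm (Fin 3)) 0 = 1 by decide,
    show ((Equiv.swap (0:Fin 3) 1)⁻¹ : Equiv.Perm (Fin 3)) 1 = 0 by decide,
    show ((Equiv.swap (0:Fin 3) 1)⁻¹ : Equiv.Perm (Fin 3)) 2 = 2 by decide,
    show ((Equiv.swap (0:Fin 3) 2)⁻¹ : Equiv.Perm (Fin 3)) 0 = 2 by decide,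
    show ((Equiv.swap (0:Fin 3) 2)⁻¹ : Equiv.Perm (Fin 3)) 1 = 1 by decide,
    show ((Equiv.swap (0:Fin 3) 2)⁻¹ : Equiv.Perm (Fin 3)) 2 = 0 by decide,
    show ((Equiv.swap (1:Fin 3) 2)⁻¹ : Equiv.Perm (Fin 3)) 0 = 0 by decide,
    show ((Equiv.swap (1:Fin 3) 2)⁻¹ : Equiv.Perm (Fin 3)) 1 = 2 by decide,
    show ((Equiv.swap (1:Fin 3) 2)⁻¹ : Equiv.Perm (Fin 3)) 2 = 1 by decide,
    show ((Equiv.swap (0:Fin 3) 1 * Equiv.swap (0:Fin 3) 2)⁻¹ : Equiv.Perm (Fin 3)) 0 = 1 by decide,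
    show ((Equiv.swap (0:Fin 3) 1 * Equiv.swap (0:Fin 3) 2)⁻¹ : Equiv.Perm (Fin 3)) 1 = 2 by decide,
    show ((Equiv.swap (0:Fin 3) 1 * Equiv.swap (0:Fin 3) 2)⁻¹ : Equiv.Perm (Fin 3)) 2 = 0 by decide,
    show ((Equiv.swap (0:Fin 3) 2 * Equiv.swap (0:Fin 3) 1)⁻¹ : Equiv.Perm (Fin 3)) 0 = 2 by decide,
    show ((Equiv.swap (0:Fin 3) 2 * Equiv.swap (0:Fin 3) 1)⁻¹ : Equiv.Perm (Fin 3)) 1 = 0 by decide,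
    show ((Equiv.swap (0:Fin 3) 2 * Equiv.swap (0:Fin 3) 1)⁻¹ : Equiv.Perm (Fin 3)) 2 = 1 by decide,
    show Equiv.Perm.sign (1 : Equiv.Perm (Fin 3)) = 1 by decide,
    show Equiv.Perm.sign (Equiv.swap (0:Fin 3) 1) = -1 by decide,
    show Equiv.Perm.sign (Equiv.swap (0:Fin 3) 2) = -1 by decide,
    show Equiv.Perm.sign (Equiv.swap (1:Fin 3) 2) = -1 by decide,
    show Equiv.Perm.sign (Equiv.swap (0:Fin 3) 1 * Equiv.swap (0:Fin 3) 2) = 1 by decide,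
    show Equiv.Perm.sign (Equiv.swap (0:Fin 3) 2 * Equiv.swap (0:Fin 3) 1) = 1 by decide,
    show (![x,y,z] : Fin 3 → V) 0 = x from rfl,
    show (![x,y,z] : Fin 3 → V) 1 = y from rfl, show (![x,y,z] : Fin 3 → V) 2 = z from rfl,
    show ((-1 : ℤˣ) : ℤ) = -1 from rfl, show ((1 : ℤˣ) : ℤ) = 1 from rfl,
    neg_smul, one_smul, LinearMap.neg_apply]
  abel

variable (K V) in
/-- 1 + C + C². -/
noncomputable def oneCyc : V ⊗[K] (V ⊗[K] V) →ₗ[K] V ⊗[K] (V ⊗[K] V) :=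
  LinearMap.id + cyc3 K V + cyc3 K V ∘ₗ cyc3 K V

variable (K V) in
/-- s ↦ assoc (s ⊗ c) + c ⊗ s. -/
noncomputable def Jmap (c : V) : V ⊗[K] V →ₗ[K] V ⊗[K] (V ⊗[K] V) :=
  (TensorProduct.assoc K V V V).toLinearMap ∘ₗ (TensorProduct.mk K (V ⊗[K] V) V).flip c
    + TensorProduct.mk K V (V ⊗[K] V) c

lemma keyA (c : V) :
    oneCyc K V ∘ₗ Jmap K V c ∘ₗ (LinearMap.id - (TensorProduct.comm K V V).toLinearMap)
      = (2:ℤ) • (Ssum K V ∘ₗ (TensorProduct.assoc K V V V).toLinearMap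
          ∘ₗ (TensorProduct.mk K (V ⊗[K] V) V).flip c) := by
  apply TensorProduct.ext'
  intro x y
  simp only [LinearMap.comp_apply, LinearMap.sub_apply, LinearMap.id_apply,
    LinearMap.smul_apply, LinearMap.flip_apply, TensorProduct.mk_apply,
    TensorProduct.comm_tmul, Jmap, LinearMap.add_apply, oneCyc,
    LinearEquiv.coe_coe]
  simp only [map_sub, map_add, sub_tmul, tmul_sub, TensorProduct.assoc_tmul,
    cyc3_tmul, Ssum_tmul]
  -- remaining : pure tensor identity
  abel

lemma S_cycle (d : V) (t : V ⊗[K] V) :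
    Ssum K V ((TensorProduct.assoc K V V V) (t ⊗ₜ[K] d)) = Ssum K V (d ⊗ₜ[K] t) := by
  induction t using TensorProduct.induction_on with
  | zero => simp
  | tmul z w => simp only [TensorProduct.assoc_tmul, Ssum_tmul]; abel
  | add t₁ t₂ h₁ h₂ => simp only [add_tmul, tmul_add, map_add, h₁, h₂]

lemma K1 (Δ : V →ₗ[K] V ⊗[K] V) (β : V →ₗ[K] V) :
    oneCyc K V ∘ₗ ((TensorProduct.assoc K V V V).toLinearMap
        ∘ₗ TensorProduct.map (Δ - deltaOp Δ) β - TensorProduct.map β (Δ - deltaOp Δ))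
      ∘ₗ (LinearMap.id - (TensorProduct.comm K V V).toLinearMap)
    = (2:ℤ) • (Ssum K V ∘ₗ ((TensorProduct.assoc K V V V).toLinearMap
        ∘ₗ TensorProduct.map Δ β - TensorProduct.map β Δ)) := by
  apply TensorProduct.ext'
  intro a b
  have hA := LinearMap.congr_fun (keyA (K := K) (V := V) (β b)) (Δ a)
  have hB := LinearMap.congr_fun (keyA (K := K) (V := V) (β a)) (Δ b)
  simp only [LinearMap.comp_apply, LinearMap.sub_apply, LinearMap.id_apply,
    LinearMap.smul_apply, LinearMap.flip_apply, TensorProduct.mk_apply,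
    LinearEquiv.coe_coe, Jmap, LinearMap.add_apply] at hA hB ⊢
  rw [S_cycle] at hB
  simp only [TensorProduct.comm_tmul, map_sub, TensorProduct.map_tmul, deltaOp,
    LinearMap.comp_apply, LinearEquiv.coe_coe, TensorProduct.assoc_tmul] at hA hB ⊢
  -- now express goal via hA and hB
  rw [show ∀ P Q R S : V ⊗[K] (V ⊗[K] V), P - Q - (R - S) = (P + S) - (Q + R) from by
    intros; abel] 
  simp only [LinearMap.sub_apply, LinearMap.comp_apply, LinearEquiv.coe_coe]
  rw [← map_add (oneCyc K V), ← map_add (oneCyc K V), hA, hB, smul_sub]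
end Aux



/-- c_β(Δ_L) + C ∘ c_β(Δ_L) + C² ∘ c_β(Δ_L)
= 2 Σ_{σ ∈ S₃} sgn(σ) Φ_σ ∘ c_β(Δ). -/
theorem stmt16 {K V : Type*} [Field K] [AddCommGroup V] [Module K V]
    (Δ : V →ₗ[K] V ⊗[K] V) (β : V →ₗ[K] V) :
    coassoc (Δ - deltaOp Δ) β
      + cyc3 K V ∘ₗ coassoc (Δ - deltaOp Δ) β
      + (cyc3 K V ∘ₗ cyc3 K V) ∘ₗ coassoc (Δ - deltaOp Δ) β
    = (2 : ℤ) • ∑ σ : Equiv.Perm (Fin 3),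
        ((Equiv.Perm.sign σ : ℤ) • (Phi σ ∘ₗ coassoc Δ β)) := by
  have e1 : coassoc (Δ - deltaOp Δ) β
      = (((TensorProduct.assoc K V V V).toLinearMap
            ∘ₗ TensorProduct.map (Δ - deltaOp Δ) β - TensorProduct.map β (Δ - deltaOp Δ))
          ∘ₗ (LinearMap.id - (TensorProduct.comm K V V).toLinearMap)) ∘ₗ Δ := by
    ext v
    simp only [coassoc, deltaOp, LinearMap.comp_apply, LinearMap.sub_apply,
      LinearMap.id_apply, LinearEquiv.coe_coe, map_sub, LinearMap.add_apply]
    abel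
  have e0 : coassoc Δ β
      = ((TensorProduct.assoc K V V V).toLinearMap ∘ₗ TensorProduct.map Δ β
          - TensorProduct.map β Δ) ∘ₗ Δ := by
    ext v; simp [coassoc]
  have e2 : (∑ σ : Equiv.Perm (Fin 3), ((Equiv.Perm.sign σ : ℤ) • (Phi σ ∘ₗ coassoc Δ β)))
      = Ssum K V ∘ₗ coassoc Δ β := by
    ext v
    simp [Ssum, LinearMap.sum_apply]
  rw [e2, e0, e1]
  have e3 : ∀ A : V ⊗[K] V →ₗ[K] V ⊗[K] (V ⊗[K] V), ∀ B : V →ₗ[K] V ⊗[K] V,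
      (A ∘ₗ B) + cyc3 K V ∘ₗ (A ∘ₗ B) + (cyc3 K V ∘ₗ cyc3 K V) ∘ₗ (A ∘ₗ B)
        = (oneCyc K V ∘ₗ A) ∘ₗ B := by
    intro A B
    simp only [oneCyc, LinearMap.add_comp, LinearMap.id_comp, LinearMap.comp_assoc]
  rw [e3, K1, LinearMap.smul_comp, LinearMap.comp_assoc]
end

section
/- Let K be a field of characteristic zero, V a K-vector space, and Δ : V → V ⊗ V, β : V → V K-linear maps. Then (V, Δ, β) is a Hom-Lie admissible Hom-coalgebra, i.e. c_β(Δ_L) + C ∘ c_β(Δ_L) + C² ∘ c_β(Δ_L) = 0 where C is the 3-cycle map a ⊗ b ⊗ c ↦ b ⊗ c ⊗ a, if and only if Σ_{σ ∈ S₃} sgn(σ) Φ_σ ∘ c_β(Δ) = 0. -/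
open TensorProduct

set_option linter.unusedSectionVars false

section ProofAux

variable {K V : Type*} [Field K] [AddCommGroup V] [Module K V]

noncomputable def Qmap : V ⊗[K] (V ⊗[K] V) →ₗ[K] V ⊗[K] (V ⊗[K] V) :=
  ∑ σ : Equiv.Perm (Fin 3), ((Equiv.Perm.sign σ : ℤ) • Phi σ)

noncomputable def Pmap : V ⊗[K] (V ⊗[K] V) →ₗ[K] V ⊗[K] (V ⊗[K] V) :=
  LinearMap.id + cyc3 K V + cyc3 K V ∘ₗ cyc3 K V

lemma univ_perm_fin3 : (Finset.univ : Finset (Equiv.Perm (Fin 3))) =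
    {1, Equiv.swap 0 1, Equiv.swap 0 2, Equiv.swap 1 2,
      Equiv.swap 0 1 * Equiv.swap 1 2, Equiv.swap 1 2 * Equiv.swap 0 1} := by
  decide

lemma Qmap_tmul (x y z : V) :
    Qmap (K := K) (x ⊗ₜ[K] (y ⊗ₜ[K] z)) =
      x ⊗ₜ[K] (y ⊗ₜ[K] z) - y ⊗ₜ[K] (x ⊗ₜ[K] z) - z ⊗ₜ[K] (y ⊗ₜ[K] x)
        - x ⊗ₜ[K] (z ⊗ₜ[K] y) + z ⊗ₜ[K] (x ⊗ₜ[K] y) + y ⊗ₜ[K] (z ⊗ₜ[K] x) := by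
  rw [Qmap, univ_perm_fin3]
  rw [Finset.sum_insert (by decide), Finset.sum_insert (by decide),
    Finset.sum_insert (by decide), Finset.sum_insert (by decide),
    Finset.sum_insert (by decide), Finset.sum_singleton]
  rw [LinearMap.add_apply, LinearMap.add_apply, LinearMap.add_apply,
    LinearMap.add_apply, LinearMap.add_apply]
  rw [LinearMap.smul_apply, LinearMap.smul_apply, LinearMap.smul_apply,
    LinearMap.smul_apply, LinearMap.smul_apply, LinearMap.smul_apply]
  rw [Phi_tmul, Phi_tmul, Phi_tmul, Phi_tmul, Phi_tmul, Phi_tmul]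
  rw [show Equiv.Perm.sign (1 : Equiv.Perm (Fin 3)) = 1 from by decide,
    show Equiv.Perm.sign (Equiv.swap (0:Fin 3) 1) = -1 from by decide,
    show Equiv.Perm.sign (Equiv.swap (0:Fin 3) 2) = -1 from by decide,
    show Equiv.Perm.sign (Equiv.swap (1:Fin 3) 2) = -1 from by decide,
    show Equiv.Perm.sign (Equiv.swap (0:Fin 3) 1 * Equiv.swap 1 2) = 1 from by decide,
    show Equiv.Perm.sign (Equiv.swap (1:Fin 3) 2 * Equiv.swap 0 1) = 1 from by decide]
  simp only [
    show ((1 : Equiv.Perm (Fin 3))⁻¹ 0) = 0 from by decide,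
    show ((1 : Equiv.Perm (Fin 3))⁻¹ 1) = 1 from by decide,
    show ((1 : Equiv.Perm (Fin 3))⁻¹ 2) = 2 from by decide,
    show ((Equiv.swap 0 1 : Equiv.Perm (Fin 3))⁻¹ 0) = 1 from by decide,
    show ((Equiv.swap 0 1 : Equiv.Perm (Fin 3))⁻¹ 1) = 0 from by decide,
    show ((Equiv.swap 0 1 : Equiv.Perm (Fin 3))⁻¹ 2) = 2 from by decide,
    show ((Equiv.swap 0 2 : Equiv.Perm (Fin 3))⁻¹ 0) = 2 from by decide,
    show ((Equiv.swap 0 2 : Equiv.Perm (Fin 3))⁻¹ 1) = 1 from by decide,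
    show ((Equiv.swap 0 2 : Equiv.Perm (Fin 3))⁻¹ 2) = 0 from by decide,
    show ((Equiv.swap 1 2 : Equiv.Perm (Fin 3))⁻¹ 0) = 0 from by decide,
    show ((Equiv.swap 1 2 : Equiv.Perm (Fin 3))⁻¹ 1) = 2 from by decide,
    show ((Equiv.swap 1 2 : Equiv.Perm (Fin 3))⁻¹ 2) = 1 from by decide,
    show ((Equiv.swap 0 1 * Equiv.swap 1 2 : Equiv.Perm (Fin 3))⁻¹ 0) = 2 from by decide,
    show ((Equiv.swap 0 1 * Equiv.swap 1 2 : Equiv.Perm (Fin 3))⁻¹ 1) = 0 from by decide,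
    show ((Equiv.swap 0 1 * Equiv.swap 1 2 : Equiv.Perm (Fin 3))⁻¹ 2) = 1 from by decide,
    show ((Equiv.swap 1 2 * Equiv.swap 0 1 : Equiv.Perm (Fin 3))⁻¹ 0) = 1 from by decide,
    show ((Equiv.swap 1 2 * Equiv.swap 0 1 : Equiv.Perm (Fin 3))⁻¹ 1) = 2 from by decide,
    show ((Equiv.swap 1 2 * Equiv.swap 0 1 : Equiv.Perm (Fin 3))⁻¹ 2) = 0 from by decide]
  simp only [Matrix.cons_val_zero, Matrix.cons_val_one, Matrix.head_cons,
    Matrix.cons_val_two, Matrix.tail_cons, Units.val_one, Units.val_neg, one_smul, neg_smul]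
  abel

lemma key_s (q : V) (s : V ⊗[K] V) :
    Pmap (K := K) ((TensorProduct.assoc K V V V)
        ((s - (TensorProduct.comm K V V) s) ⊗ₜ[K] q)
      + q ⊗ₜ[K] (s - (TensorProduct.comm K V V) s))
    = (2 : ℤ) • Qmap (K := K) ((TensorProduct.assoc K V V V) (s ⊗ₜ[K] q)) := by
  induction s using TensorProduct.induction_on with
  | zero => simp
  | tmul x y =>
      simp only [TensorProduct.comm_tmul, sub_tmul, tmul_sub, map_sub, map_add,
        TensorProduct.assoc_tmul]
      rw [Qmap_tmul]
      simp only [Pmap, LinearMap.add_apply, LinearMap.comp_apply, LinearMap.id_apply,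
        map_add, map_sub, cyc3_tmul]
      abel
  | add s₁ s₂ h1 h2 =>
      rw [map_add, map_add,
        show s₁ + s₂ - ((TensorProduct.comm K V V) s₁ + (TensorProduct.comm K V V) s₂)
            = (s₁ - (TensorProduct.comm K V V) s₁) + (s₂ - (TensorProduct.comm K V V) s₂)
          from by abel]
      simp only [add_tmul, tmul_add, map_add] at h1 h2 ⊢
      rw [smul_add, ← h1, ← h2]
      abel

lemma key_u (p : V) (u : V ⊗[K] V) :
    Pmap (K := K) (p ⊗ₜ[K] (u - (TensorProduct.comm K V V) u)
      + (TensorProduct.assoc K V V V) ((u - (TensorProduct.comm K V V) u) ⊗ₜ[K] p))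
    = (2 : ℤ) • Qmap (K := K) (p ⊗ₜ[K] u) := by
  induction u using TensorProduct.induction_on with
  | zero => simp
  | tmul x y =>
      simp only [TensorProduct.comm_tmul, sub_tmul, tmul_sub, map_sub, map_add,
        TensorProduct.assoc_tmul]
      rw [Qmap_tmul]
      simp only [Pmap, LinearMap.add_apply, LinearMap.comp_apply, LinearMap.id_apply,
        map_add, map_sub, cyc3_tmul]
      abel
  | add s₁ s₂ h1 h2 =>
      rw [map_add, map_add,
        show s₁ + s₂ - ((TensorProduct.comm K V V) s₁ + (TensorProduct.comm K V V) s₂)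
            = (s₁ - (TensorProduct.comm K V V) s₁) + (s₂ - (TensorProduct.comm K V V) s₂)
          from by abel]
      simp only [add_tmul, tmul_add, map_add] at h1 h2 ⊢
      rw [smul_add, ← h1, ← h2]
      abel

lemma key_maps (Δ : V →ₗ[K] V ⊗[K] V) (β : V →ₗ[K] V) :
    Pmap (K := K) ∘ₗ (((TensorProduct.assoc K V V V).toLinearMap ∘ₗ
          TensorProduct.map (Δ - deltaOp Δ) β - TensorProduct.map β (Δ - deltaOp Δ)) ∘ₗ
        (LinearMap.id - (TensorProduct.comm K V V).toLinearMap))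
      = (2 : ℤ) • (Qmap (K := K) ∘ₗ ((TensorProduct.assoc K V V V).toLinearMap ∘ₗ
          TensorProduct.map Δ β - TensorProduct.map β Δ)) := by
  apply TensorProduct.ext'
  intro a b
  simp only [LinearMap.comp_apply, LinearMap.smul_apply, LinearMap.sub_apply,
    LinearMap.id_apply, LinearEquiv.coe_coe, deltaOp, map_sub, TensorProduct.comm_tmul,
    TensorProduct.map_tmul, TensorProduct.sub_tmul, TensorProduct.tmul_sub]
  have hs := key_s (K := K) (β b) (Δ a)
  have hu := key_u (K := K) (β a) (Δ b)
  simp only [tmul_sub, sub_tmul, map_sub, map_add] at hs hu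
  rw [smul_sub, ← hs, ← hu]
  abel

end ProofAux


/-- over a field of characteristic zero, (V, Δ, β) is a Hom-Lie
admissible Hom-coalgebra if and only if Σ_{σ ∈ S₃} sgn(σ) Φ_σ ∘ c_β(Δ) = 0. -/
theorem stmt17 {K V : Type*} [Field K] [CharZero K] [AddCommGroup V] [Module K V]
    (Δ : V →ₗ[K] V ⊗[K] V) (β : V →ₗ[K] V) :
    (coassoc (Δ - deltaOp Δ) β
        + cyc3 K V ∘ₗ coassoc (Δ - deltaOp Δ) β
        + (cyc3 K V ∘ₗ cyc3 K V) ∘ₗ coassoc (Δ - deltaOp Δ) β = 0)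
      ↔ (∑ σ : Equiv.Perm (Fin 3),
          ((Equiv.Perm.sign σ : ℤ) • (Phi σ ∘ₗ coassoc Δ β)) = 0) := by
  have hP : coassoc (Δ - deltaOp Δ) β
      + cyc3 K V ∘ₗ coassoc (Δ - deltaOp Δ) β
      + (cyc3 K V ∘ₗ cyc3 K V) ∘ₗ coassoc (Δ - deltaOp Δ) β
      = Pmap (K := K) ∘ₗ coassoc (Δ - deltaOp Δ) β := by
    ext v
    simp [Pmap]
  have hfac : ∀ Λ : V →ₗ[K] V ⊗[K] V,
      coassoc Λ β = ((TensorProduct.assoc K V V V).toLinearMap ∘ₗ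
          TensorProduct.map Λ β - TensorProduct.map β Λ) ∘ₗ Λ := by
    intro Λ
    ext v
    simp [coassoc]
  have h1 : coassoc (Δ - deltaOp Δ) β
      + cyc3 K V ∘ₗ coassoc (Δ - deltaOp Δ) β
      + (cyc3 K V ∘ₗ cyc3 K V) ∘ₗ coassoc (Δ - deltaOp Δ) β
      = (2 : ℤ) • (Qmap (K := K) ∘ₗ coassoc Δ β) := by
    rw [hP]
    ext v
    have hk := LinearMap.congr_fun (key_maps Δ β) (Δ v)
    simp only [LinearMap.comp_apply, LinearMap.sub_apply, LinearMap.smul_apply,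
      LinearMap.id_apply, LinearEquiv.coe_coe, coassoc, deltaOp, map_sub] at hk ⊢
    rw [← hk]
    abel
  have h2 : (∑ σ : Equiv.Perm (Fin 3),
        ((Equiv.Perm.sign σ : ℤ) • (Phi σ ∘ₗ coassoc Δ β)))
      = Qmap (K := K) ∘ₗ coassoc Δ β := by
    ext v
    simp [Qmap, LinearMap.sum_apply]
  rw [h1, h2]
  constructor
  · intro h
    ext v
    have hv := LinearMap.congr_fun h v
    simp only [LinearMap.smul_apply, LinearMap.zero_apply, LinearMap.comp_apply] at hv
    rw [two_zsmul] at hv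
    have h' : (2 : K) • (Qmap (K := K) ((coassoc Δ β) v)) = 0 := by
      rw [two_smul]
      exact hv
    simp only [LinearMap.comp_apply, LinearMap.zero_apply]
    rcases smul_eq_zero.mp h' with h2' | h2'
    · exact absurd h2' two_ne_zero
    · exact h2'
  · intro h
    rw [h, smul_zero]
end

section
/- Let K be a field of characteristic zero, V a K-vector space, Δ : V → V ⊗ V and β : V → V K-linear maps, and G a subgroup of the symmetric group S₃. If (V, Δ, β) is a G-Hom-coalgebra, i.e. Σ_{σ ∈ G} sgn(σ) Φ_σ ∘ c_β(Δ) = 0, then (V, Δ, β) is a Hom-Lie admissible Hom-coalgebra: c_β(Δ_L) + C ∘ c_β(Δ_L) + C² ∘ c_β(Δ_L) = 0, where Δ_L := Δ − τ ∘ Δ and C is the 3-cycle map a ⊗ b ⊗ c ↦ b ⊗ c ⊗ a. -/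
open TensorProduct

set_option linter.unusedSectionVars false

section Aux
variable {K V : Type*} [Field K] [AddCommGroup V] [Module K V]

/-- The 3-cycle 0 ↦ 1 ↦ 2 ↦ 0. -/
def c3 : Equiv.Perm (Fin 3) := ⟨![1,2,0], ![2,0,1], by decide, by decide⟩
/-- Its square/inverse, 0 ↦ 2 ↦ 1 ↦ 0. -/
def c3' : Equiv.Perm (Fin 3) := ⟨![2,0,1], ![1,2,0], by decide, by decide⟩

lemma Phi_comp (σ τ : Equiv.Perm (Fin 3)) :
    Phi (K := K) (V := V) σ ∘ₗ Phi τ = Phi (σ * τ) := by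
  ext x y z
  simp only [LinearMap.comp_apply, AlgebraTensorModule.curry_apply, curry_apply,
    LinearMap.coe_restrictScalars, Phi_tmul]
  have h : ∀ k : Fin 3,
      ![![x,y,z] (τ⁻¹ 0), ![x,y,z] (τ⁻¹ 1), ![x,y,z] (τ⁻¹ 2)] k = ![x,y,z] (τ⁻¹ k) :=
    fun k => by fin_cases k <;> rfl
  rw [h, h, h]
  simp [mul_inv_rev, Equiv.Perm.mul_apply]

lemma cyc3_eq : cyc3 K V = Phi c3' := by
  ext x y z
  simp [cyc3, Phi_tmul, c3']

lemma S3 : (TensorProduct.assoc K V V V).toLinearMap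
      ∘ₗ TensorProduct.map (TensorProduct.comm K V V).toLinearMap (LinearMap.id : V →ₗ[K] V)
    = Phi (Equiv.swap 0 1) ∘ₗ (TensorProduct.assoc K V V V).toLinearMap := by
  ext x y z
  simp [Phi_tmul, Equiv.swap_apply_def]

lemma S4 : TensorProduct.map (LinearMap.id : V →ₗ[K] V) (TensorProduct.comm K V V).toLinearMap
    = Phi (Equiv.swap 1 2) := by
  ext x y z
  simp [Phi_tmul, Equiv.swap_apply_def]

lemma S6 : (TensorProduct.comm K (V ⊗[K] V) V).toLinearMap
      ∘ₗ (TensorProduct.assoc K V V V).symm.toLinearMap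
    = Phi (K := K) c3 := by
  ext x y z
  simp [Phi_tmul, c3]


lemma map_sub_left (f g : V →ₗ[K] V ⊗[K] V) (β : V →ₗ[K] V) :
    TensorProduct.map (f - g) β = TensorProduct.map f β - TensorProduct.map g β := by
  ext x y; simp [sub_tmul]

lemma map_sub_right (f g : V →ₗ[K] V ⊗[K] V) (β : V →ₗ[K] V) :
    TensorProduct.map β (f - g) = TensorProduct.map β f - TensorProduct.map β g := by
  ext x y; simp [tmul_sub]

lemma S1 (Δ : V →ₗ[K] V ⊗[K] V) (β : V →ₗ[K] V) :
    TensorProduct.map Δ β ∘ₗ (TensorProduct.comm K V V).toLinearMap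
    = (TensorProduct.comm K V (V ⊗[K] V)).toLinearMap ∘ₗ TensorProduct.map β Δ := by
  ext x y; simp

lemma S2 (Δ : V →ₗ[K] V ⊗[K] V) (β : V →ₗ[K] V) :
    TensorProduct.map β Δ ∘ₗ (TensorProduct.comm K V V).toLinearMap
    = (TensorProduct.comm K (V ⊗[K] V) V).toLinearMap ∘ₗ TensorProduct.map Δ β := by
  ext x y; simp

end Aux

section Aux2
variable {K V : Type*} [Field K] [AddCommGroup V] [Module K V]

lemma Phi_one : Phi (K := K) (V := V) 1 = LinearMap.id := by
  ext x y z
  simp [Phi_tmul]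

lemma comp_sum' {ι : Type*} {W X : Type*} [AddCommGroup W] [Module K W]
    [AddCommGroup X] [Module K X]
    (f : W →ₗ[K] X) (s : Finset ι) (g : ι → (V →ₗ[K] W)) :
    f ∘ₗ (∑ i ∈ s, g i) = ∑ i ∈ s, f ∘ₗ g i := by
  ext v; simp

lemma comp_zsmul' {W X : Type*} [AddCommGroup W] [Module K W]
    [AddCommGroup X] [Module K X]
    (f : W →ₗ[K] X) (z : ℤ) (g : V →ₗ[K] W) :
    f ∘ₗ (z • g) = z • (f ∘ₗ g) := by
  ext v; simp

lemma Phi_comp' (σ τ : Equiv.Perm (Fin 3)) (X : V →ₗ[K] V ⊗[K] (V ⊗[K] V)) :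
    Phi σ ∘ₗ (Phi τ ∘ₗ X) = Phi (σ * τ) ∘ₗ X := by
  rw [← LinearMap.comp_assoc, Phi_comp]

lemma S1' (Δ : V →ₗ[K] V ⊗[K] V) (β : V →ₗ[K] V) (X : V →ₗ[K] V ⊗[K] V) :
    TensorProduct.map Δ β ∘ₗ ((TensorProduct.comm K V V).toLinearMap ∘ₗ X)
    = (TensorProduct.comm K V (V ⊗[K] V)).toLinearMap ∘ₗ (TensorProduct.map β Δ ∘ₗ X) := by
  rw [← LinearMap.comp_assoc, S1, LinearMap.comp_assoc]

lemma S2' (Δ : V →ₗ[K] V ⊗[K] V) (β : V →ₗ[K] V) (X : V →ₗ[K] V ⊗[K] V) :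
    TensorProduct.map β Δ ∘ₗ ((TensorProduct.comm K V V).toLinearMap ∘ₗ X)
    = (TensorProduct.comm K (V ⊗[K] V) V).toLinearMap ∘ₗ (TensorProduct.map Δ β ∘ₗ X) := by
  rw [← LinearMap.comp_assoc, S2, LinearMap.comp_assoc]

lemma S3' (X : V →ₗ[K] (V ⊗[K] V) ⊗[K] V) :
    (TensorProduct.assoc K V V V).toLinearMap
        ∘ₗ (TensorProduct.map (TensorProduct.comm K V V).toLinearMap (LinearMap.id : V →ₗ[K] V) ∘ₗ X)
    = Phi (Equiv.swap 0 1) ∘ₗ ((TensorProduct.assoc K V V V).toLinearMap ∘ₗ X) := by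
  rw [← LinearMap.comp_assoc, S3, LinearMap.comp_assoc]

lemma S5' (X : V →ₗ[K] V ⊗[K] (V ⊗[K] V)) :
    (TensorProduct.assoc K V V V).toLinearMap
        ∘ₗ ((TensorProduct.comm K V (V ⊗[K] V)).toLinearMap ∘ₗ X)
    = Phi c3' ∘ₗ X := by
  rw [← LinearMap.comp_assoc]
  rw [show (TensorProduct.assoc K V V V).toLinearMap
      ∘ₗ (TensorProduct.comm K V (V ⊗[K] V)).toLinearMap = Phi (K := K) (V := V) c3' from cyc3_eq]

lemma S6'' : (TensorProduct.comm K (V ⊗[K] V) V).toLinearMap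
    = Phi (K := K) (V := V) c3 ∘ₗ (TensorProduct.assoc K V V V).toLinearMap := by
  ext x y z
  simp [Phi_tmul, c3]

lemma S6' (X : V →ₗ[K] (V ⊗[K] V) ⊗[K] V) :
    (TensorProduct.comm K (V ⊗[K] V) V).toLinearMap ∘ₗ X
    = Phi c3 ∘ₗ ((TensorProduct.assoc K V V V).toLinearMap ∘ₗ X) := by
  rw [S6'', LinearMap.comp_assoc]

end Aux2

/-- over a field of characteristic zero, every G-Hom-coalgebra
(G a subgroup of S₃) is a Hom-Lie admissible Hom-coalgebra. -/
theorem stmt18 {K V : Type*} [Field K] [CharZero K] [AddCommGroup V] [Module K V]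
    (Δ : V →ₗ[K] V ⊗[K] V) (β : V →ₗ[K] V)
    (G : Subgroup (Equiv.Perm (Fin 3))) [DecidablePred (· ∈ G)]
    (hG : ∑ σ ∈ Finset.univ.filter (· ∈ G),
        ((Equiv.Perm.sign σ : ℤ) • (Phi σ ∘ₗ coassoc Δ β)) = 0) :
    coassoc (Δ - deltaOp Δ) β
      + cyc3 K V ∘ₗ coassoc (Δ - deltaOp Δ) β
      + (cyc3 K V ∘ₗ cyc3 K V) ∘ₗ coassoc (Δ - deltaOp Δ) β = 0 := by
  classical
  set filt := Finset.univ.filter (· ∈ G) with hfilt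
  -- Step 1: the full alternating sum over S₃ vanishes.
  have key : filt.card • (∑ σ : Equiv.Perm (Fin 3),
      ((Equiv.Perm.sign σ : ℤ) • (Phi σ ∘ₗ coassoc Δ β))) = 0 := by
    calc filt.card • (∑ σ : Equiv.Perm (Fin 3),
          ((Equiv.Perm.sign σ : ℤ) • (Phi σ ∘ₗ coassoc Δ β)))
        = ∑ _g ∈ filt, (∑ σ : Equiv.Perm (Fin 3),
            ((Equiv.Perm.sign σ : ℤ) • (Phi σ ∘ₗ coassoc Δ β))) := by
          rw [Finset.sum_const]
      _ = ∑ g ∈ filt, ∑ ρ : Equiv.Perm (Fin 3),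
            ((Equiv.Perm.sign ρ : ℤ) • (Phi ρ ∘ₗ
              ((Equiv.Perm.sign g : ℤ) • (Phi g ∘ₗ coassoc Δ β)))) := by
          refine Finset.sum_congr rfl fun g _ => ?_
          rw [← Equiv.sum_comp (Equiv.mulRight g)
            (fun σ => ((Equiv.Perm.sign σ : ℤ) • (Phi σ ∘ₗ coassoc Δ β)))]
          refine Finset.sum_congr rfl fun ρ _ => ?_
          simp only [Equiv.coe_mulRight]
          rw [comp_zsmul', smul_smul, ← Phi_comp, LinearMap.comp_assoc, map_mul]
          simp [mul_comm]
      _ = ∑ ρ : Equiv.Perm (Fin 3),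
            ((Equiv.Perm.sign ρ : ℤ) • (Phi ρ ∘ₗ
              (∑ g ∈ filt, ((Equiv.Perm.sign g : ℤ) • (Phi g ∘ₗ coassoc Δ β))))) := by
          rw [Finset.sum_comm]
          refine Finset.sum_congr rfl fun ρ _ => ?_
          rw [comp_sum', Finset.smul_sum]
      _ = 0 := by rw [hG]; simp
  have hcard : (filt.card : K) ≠ 0 := by
    have : 0 < filt.card := Finset.card_pos.mpr
      ⟨1, Finset.mem_filter.mpr ⟨Finset.mem_univ 1, G.one_mem⟩⟩
    exact Nat.cast_ne_zero.mpr this.ne'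
  have hF : (∑ σ : Equiv.Perm (Fin 3),
      ((Equiv.Perm.sign σ : ℤ) • (Phi σ ∘ₗ coassoc Δ β))) = 0 := by
    have h2 : (filt.card : K) • (∑ σ : Equiv.Perm (Fin 3),
        ((Equiv.Perm.sign σ : ℤ) • (Phi σ ∘ₗ coassoc Δ β))) = 0 := by
      rw [Nat.cast_smul_eq_nsmul]; exact key
    calc (∑ σ : Equiv.Perm (Fin 3), ((Equiv.Perm.sign σ : ℤ) • (Phi σ ∘ₗ coassoc Δ β)))
        = ((filt.card : K)⁻¹ * (filt.card : K)) •
            (∑ σ : Equiv.Perm (Fin 3), ((Equiv.Perm.sign σ : ℤ) • (Phi σ ∘ₗ coassoc Δ β))) := by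
          rw [inv_mul_cancel₀ hcard, one_smul]
      _ = 0 := by rw [mul_smul, h2, smul_zero]
  -- Step 2: expand the sum over S₃ explicitly.
  have huniv : (Finset.univ : Finset (Equiv.Perm (Fin 3)))
      = {1, c3, c3', Equiv.swap 0 1, Equiv.swap 0 2, Equiv.swap 1 2} := by decide
  rw [huniv, Finset.sum_insert (by decide), Finset.sum_insert (by decide),
    Finset.sum_insert (by decide), Finset.sum_insert (by decide),
    Finset.sum_insert (by decide), Finset.sum_singleton] at hF
  have hs1 : Equiv.Perm.sign (c3) = 1 := by decide
  have hs2 : Equiv.Perm.sign (c3') = 1 := by decide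
  have hs3 : Equiv.Perm.sign (Equiv.swap (0:Fin 3) 1) = -1 := by decide
  have hs4 : Equiv.Perm.sign (Equiv.swap (0:Fin 3) 2) = -1 := by decide
  have hs5 : Equiv.Perm.sign (Equiv.swap (1:Fin 3) 2) = -1 := by decide
  rw [map_one, hs1, hs2, hs3, hs4, hs5] at hF
  simp only [Units.val_one, Units.val_neg, one_smul, neg_smul] at hF
  simp only [coassoc, deltaOp, LinearMap.comp_sub] at hF ⊢
  rw [cyc3_eq]
  rw [map_sub_left, map_sub_right]
  rw [show TensorProduct.map ((TensorProduct.comm K V V).toLinearMap ∘ₗ Δ) β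
      = TensorProduct.map (TensorProduct.comm K V V).toLinearMap LinearMap.id
          ∘ₗ TensorProduct.map Δ β by
    rw [← TensorProduct.map_comp, LinearMap.id_comp]]
  rw [show TensorProduct.map β ((TensorProduct.comm K V V).toLinearMap ∘ₗ Δ)
      = TensorProduct.map LinearMap.id (TensorProduct.comm K V V).toLinearMap
          ∘ₗ TensorProduct.map β Δ by
    rw [← TensorProduct.map_comp, LinearMap.id_comp]]
  simp only [LinearMap.comp_sub, LinearMap.sub_comp]
  simp only [LinearMap.comp_assoc]
  simp only [S4]
  simp only [S1', S2']
  simp only [S3', S5', S6']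
  simp only [Phi_comp']
  simp only [show c3' * c3' = c3 from by decide, show c3' * c3 = 1 from by decide,
    show c3 * c3' = 1 from by decide, show c3 * c3 = c3' from by decide,
    show Equiv.swap (0:Fin 3) 1 * c3' = Equiv.swap 0 2 from by decide,
    show Equiv.swap (1:Fin 3) 2 * c3 = Equiv.swap 0 2 from by decide,
    show c3' * Equiv.swap (0:Fin 3) 1 = Equiv.swap 1 2 from by decide,
    show c3' * Equiv.swap (0:Fin 3) 2 = Equiv.swap 0 1 from by decide,
    show c3' * Equiv.swap (1:Fin 3) 2 = Equiv.swap 0 2 from by decide,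
    show c3 * Equiv.swap (0:Fin 3) 1 = Equiv.swap 0 2 from by decide,
    show c3 * Equiv.swap (0:Fin 3) 2 = Equiv.swap 1 2 from by decide,
    show c3 * Equiv.swap (1:Fin 3) 2 = Equiv.swap 0 1 from by decide, mul_one]
  simp only [Phi_one, LinearMap.id_comp] at hF ⊢
  have hF2 := congrArg (fun x => x + x) hF
  simp only [add_zero] at hF2
  rw [← hF2]
  abel
end

section
/- Let K be a field, V a K-vector space, Δ : V → V ⊗ V and β : V → V K-linear maps, and G a subgroup of the symmetric group S₃ such that (V, Δ, β) is a G-Hom-coalgebra, i.e. Σ_{σ ∈ G} sgn(σ) Φ_σ ∘ c_β(Δ) = 0. On the dual space V* = Hom_K(V, K) define the multiplication μ*(f, g) := m_K ∘ (f ⊗ g) ∘ Δ for f, g ∈ V* (where m_K : K ⊗ K → K is the multiplication of K, so μ*(f,g) is the composite V → V ⊗ V → K ⊗ K → K), and define α* : V* → V* by α*(f) := f ∘ β. Then (V*, μ*, α*) is a G-Hom-associative algebra: for all f₁, f₂, f₃ ∈ V*, Σ_{σ ∈ G} sgn(σ) · a(f_{σ⁻¹(1)}, f_{σ⁻¹(2)},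 f_{σ⁻¹(3)}) = 0, where a(f, g, h) := μ*(μ*(f,g), α*(h)) − μ*(α*(f), μ*(g,h)) is the α*-associator. -/
open TensorProduct

set_option linter.unusedSectionVars false

section Dual

variable {K V : Type*} [Field K] [AddCommGroup V] [Module K V]

/-- The dual multiplication μ*(f,g) := m_K ∘ (f ⊗ g) ∘ Δ on V* = Hom_K(V,K). -/
noncomputable def mulStar (Δ : V →ₗ[K] V ⊗[K] V) (f g : V →ₗ[K] K) : V →ₗ[K] K :=
  LinearMap.mul' K K ∘ₗ TensorProduct.map f g ∘ₗ Δ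

/-- α* : V* → V*, α*(f) := f ∘ β. -/
noncomputable def alphaStar (β : V →ₗ[K] V) (f : V →ₗ[K] K) : V →ₗ[K] K :=
  f ∘ₗ β

/-- The α*-associator a(f,g,h) := μ*(μ*(f,g), α*(h)) − μ*(α*(f), μ*(g,h)). -/
noncomputable def dualAssociator (Δ : V →ₗ[K] V ⊗[K] V) (β : V →ₗ[K] V)
    (f g h : V →ₗ[K] K) : V →ₗ[K] K :=
  mulStar Δ (mulStar Δ f g) (alphaStar β h)
    - mulStar Δ (alphaStar β f) (mulStar Δ g h)

end Dual

section Aux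

variable {K V : Type*} [Field K] [AddCommGroup V] [Module K V]

/-- Evaluation of a triple of functionals on V ⊗ (V ⊗ V). -/
noncomputable def evalTri (f g h : V →ₗ[K] K) : V ⊗[K] (V ⊗[K] V) →ₗ[K] K :=
  LinearMap.mul' K K ∘ₗ
    TensorProduct.map f (LinearMap.mul' K K ∘ₗ TensorProduct.map g h)

lemma evalTri_tmul (f g h : V →ₗ[K] K) (x y z : V) :
    evalTri f g h (x ⊗ₜ[K] (y ⊗ₜ[K] z)) = f x * (g y * h z) := by
  simp [evalTri]

lemma dualAssociator_eq (Δ : V →ₗ[K] V ⊗[K] V) (β : V →ₗ[K] V)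
    (f g h : V →ₗ[K] K) :
    dualAssociator Δ β f g h = evalTri f g h ∘ₗ coassoc Δ β := by
  have h1 : evalTri f g h ∘ₗ
      ((TensorProduct.assoc K V V V).toLinearMap ∘ₗ TensorProduct.map Δ β)
      = LinearMap.mul' K K ∘ₗ
          TensorProduct.map (mulStar Δ f g) (alphaStar β h) := by
    apply TensorProduct.ext'
    intro x y
    simp only [LinearMap.comp_apply, TensorProduct.map_tmul, mulStar, alphaStar,
      LinearMap.mul'_apply]
    induction Δ x using TensorProduct.induction_on with
    | zero => simp
    | tmul p q => simp [evalTri, mul_assoc]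
    | add u v hu hv =>
        simp only [TensorProduct.add_tmul, map_add, hu, hv, add_mul]
  have h2 : evalTri f g h ∘ₗ TensorProduct.map β Δ
      = LinearMap.mul' K K ∘ₗ
          TensorProduct.map (alphaStar β f) (mulStar Δ g h) := by
    apply TensorProduct.ext'
    intro x y
    simp [evalTri, mulStar, alphaStar]
  ext x
  have e1 := LinearMap.congr_fun h1 (Δ x)
  have e2 := LinearMap.congr_fun h2 (Δ x)
  simp only [mulStar, LinearMap.comp_apply] at e1 e2
  simp only [dualAssociator, coassoc, mulStar, LinearMap.sub_apply,
    LinearMap.comp_apply, ← e1, ← e2, map_sub]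

lemma evalTri_comp_Phi (f₁ f₂ f₃ : V →ₗ[K] K) (σ : Equiv.Perm (Fin 3)) :
    evalTri f₁ f₂ f₃ ∘ₗ Phi (K := K) σ
      = evalTri (![f₁, f₂, f₃] (σ 0)) (![f₁, f₂, f₃] (σ 1))
          (![f₁, f₂, f₃] (σ 2)) := by
  set F := ![f₁, f₂, f₃] with hF
  apply TensorProduct.ext'
  intro x u
  induction u using TensorProduct.induction_on with
  | zero => simp
  | add u v hu hv => simp only [TensorProduct.tmul_add, map_add, hu, hv]
  | tmul y z =>
      simp only [LinearMap.comp_apply, Phi_tmul, evalTri_tmul]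
      set m := ![x, y, z] with hm
      have hx : x = m 0 := rfl
      have hy : y = m 1 := rfl
      have hz : z = m 2 := rfl
      rw [hx, hy, hz]
      have key : ∏ i : Fin 3, F i (m (σ⁻¹ i))
          = ∏ j : Fin 3, F (σ j) (m j) := by
        rw [← Equiv.prod_comp σ (fun i => F i (m (σ⁻¹ i)))]
        simp
      have l1 : F 0 (m (σ⁻¹ 0)) * (F 1 (m (σ⁻¹ 1)) * F 2 (m (σ⁻¹ 2)))
          = ∏ i : Fin 3, F i (m (σ⁻¹ i)) := by
        rw [Fin.prod_univ_three]; ring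
      have l2 : F (σ 0) (m 0) * (F (σ 1) (m 1) * F (σ 2) (m 2))
          = ∏ j : Fin 3, F (σ j) (m j) := by
        rw [Fin.prod_univ_three]; ring
      rw [l2, ← key, ← l1]
      simp [hF]

end Aux

/-- the dual of a G-Hom-coalgebra is a G-Hom-associative algebra. -/
theorem stmt19 {K V : Type*} [Field K] [AddCommGroup V] [Module K V]
    (Δ : V →ₗ[K] V ⊗[K] V) (β : V →ₗ[K] V)
    (G : Subgroup (Equiv.Perm (Fin 3))) [DecidablePred (· ∈ G)]
    (hG : ∑ σ ∈ Finset.univ.filter (· ∈ G),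
        ((Equiv.Perm.sign σ : ℤ) • (Phi σ ∘ₗ coassoc Δ β)) = 0) :
    ∀ f₁ f₂ f₃ : V →ₗ[K] K,
      ∑ σ ∈ Finset.univ.filter (· ∈ G),
        ((Equiv.Perm.sign σ : ℤ) •
          dualAssociator Δ β (![f₁, f₂, f₃] (σ⁻¹ 0)) (![f₁, f₂, f₃] (σ⁻¹ 1))
            (![f₁, f₂, f₃] (σ⁻¹ 2))) = 0 := by
  intro f₁ f₂ f₃
  set E := evalTri f₁ f₂ f₃ with hE
  have step : ∀ σ : Equiv.Perm (Fin 3),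
      dualAssociator Δ β (![f₁, f₂, f₃] (σ⁻¹ 0)) (![f₁, f₂, f₃] (σ⁻¹ 1))
          (![f₁, f₂, f₃] (σ⁻¹ 2))
        = E ∘ₗ (Phi σ⁻¹ ∘ₗ coassoc Δ β) := by
    intro σ
    rw [dualAssociator_eq, ← evalTri_comp_Phi f₁ f₂ f₃ σ⁻¹, LinearMap.comp_assoc]
  simp only [step]
  have reidx : ∑ σ ∈ Finset.univ.filter (· ∈ G),
      ((Equiv.Perm.sign σ : ℤ) • (E ∘ₗ (Phi σ⁻¹ ∘ₗ coassoc Δ β)))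
      = ∑ σ ∈ Finset.univ.filter (· ∈ G),
      ((Equiv.Perm.sign σ : ℤ) • (E ∘ₗ (Phi σ ∘ₗ coassoc Δ β))) := by
    apply Finset.sum_nbij' (fun σ => σ⁻¹) (fun σ => σ⁻¹)
    · intro a ha
      simp only [Finset.mem_filter, Finset.mem_univ, true_and] at ha ⊢
      exact G.inv_mem ha
    · intro a ha
      simp only [Finset.mem_filter, Finset.mem_univ, true_and] at ha ⊢
      exact G.inv_mem ha
    · intro a _; simp
    · intro a _; simp
    · intro a _; simp
  rw [reidx]
  have : ∑ σ ∈ Finset.univ.filter (· ∈ G),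
      ((Equiv.Perm.sign σ : ℤ) • (E ∘ₗ (Phi σ ∘ₗ coassoc Δ β)))
      = E ∘ₗ ∑ σ ∈ Finset.univ.filter (· ∈ G),
          ((Equiv.Perm.sign σ : ℤ) • (Phi σ ∘ₗ coassoc Δ β)) := by
    ext w
    rw [LinearMap.sum_apply, LinearMap.comp_apply, LinearMap.sum_apply, map_sum]
    refine Finset.sum_congr rfl fun σ _ => ?_
    simp
  rw [this, hG, LinearMap.comp_zero]
end
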